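/- arXiv:2306.04890 — 2 statements merged into one kernel-verified Lean document; each statement's English description precedes it below -/
import Mathlib

section
/- Define the generalized KL divergence on positive reals by D(a ‖ b) = a·log(a/b) − a + b. If p > 0 and Δ ∈ ℝ satisfy |Δ| ≤ (1/4)·p, then Δ²/p ≤ (9/2)·D(p + Δ ‖ p). -/
/-- The squared relative price change is bounded by the generalized KL
divergence of consecutive prices. -/
theorem sq_change_le_kl
    (p Δ : ℝ) (hp : 0 < p) (hΔ : |Δ| ≤ (1 / 4) * p) :
    Δ ^ 2 / p ≤ (9 / 2) * ((p + Δ) * Real.log ((p + Δ) / p) - (p + Δ) + p) := by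
  have habs := abs_le.mp hΔ
  have ha : (0:ℝ) < p + Δ := by linarith
  set a := p + Δ with ha_def
  set s := Real.sqrt p with hs_def
  set t := Real.sqrt a with ht_def
  have hs2 : s ^ 2 = p := Real.sq_sqrt hp.le
  have ht2 : t ^ 2 = a := Real.sq_sqrt ha.le
  have hs0 : 0 < s := Real.sqrt_pos.mpr hp
  have ht0 : 0 < t := Real.sqrt_pos.mpr ha
  -- log bound: log (a/p) ≥ 2 * (1 - s/t)
  have hlog1 : Real.log (t / s) ≥ 1 - s / t := by
    have := Real.one_sub_inv_le_log_of_pos (x := t / s) (div_pos ht0 hs0)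
    rwa [inv_div] at this
  have hlogeq : Real.log (a / p) = 2 * Real.log (t / s) := by
    rw [ht_def, hs_def, ← Real.sqrt_div' a (by positivity), Real.log_sqrt (by positivity)]
    · ring
  have hlog : Real.log (a / p) ≥ 2 * (1 - s / t) := by
    rw [hlogeq]; linarith
  -- D ≥ (t - s)^2
  have hD : a * Real.log (a / p) - a + p ≥ (t - s) ^ 2 := by
    have h1 : a * Real.log (a / p) ≥ a * (2 * (1 - s / t)) :=
      mul_le_mul_of_nonneg_left hlog ha.le
    have h2 : a * (2 * (1 - s / t)) = 2 * t ^ 2 - 2 * t * s := by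
      rw [← ht2]; field_simp
    nlinarith [h1, h2]
  rw [div_le_iff₀ hp]
  have hΔeq : Δ = t ^ 2 - s ^ 2 := by rw [ht2, hs2]; ring
  have hta : t ^ 2 ≤ (5 / 4) * s ^ 2 := by rw [ht2, hs2]; linarith
  nlinarith [sq_nonneg (2 * t - (9/4) * s), mul_le_mul_of_nonneg_right hD (by positivity : (0:ℝ) ≤ (9/2) * p), sq_nonneg (t - s), sq_nonneg (t + s), mul_pos hs0 ht0]
end

section
/- Let f, h : ℝ^n → ℝ be convex with h differentiable, and define the Bregman divergence D_h(x, y) = h(x) − h(y) − ∇h(y)·(x − y). Let x* minimize f over a convex set V and let the mirror descent iterates satisfy x^{(t+1)} = argmin_{x ∈ V} { f(x^{(t)}) + g_t·(x − x^{(t)}) + γ·D_h(x, x^{(t)}) } with g_t ∈ ∂f(x^{(t)}), and suppose for all t, f(x^{(t+1)}) ≤ f(x^{(t)}) + g_t·(x^{(t+1)} − x^{(t)}) + γ·D_h(x^{(t+1)}, x^{(t)}). Then for all t ≥ 1, f(x^{(t)}) − f(x*) ≤ (γ/t)·D_h(x*, x^{(0)}). -/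
open Filter Set

lemma slopeA {φ : ℝ → ℝ} {d : ℝ} (hφ : ConvexOn ℝ Set.univ φ)
    (hd : HasDerivAt φ d 0) : φ 0 + d ≤ φ 1 := by
  have ht : Tendsto (slope φ 0) (nhdsWithin 0 (Set.Ioi 0)) (nhds d) :=
    (hasDerivAt_iff_tendsto_slope.mp hd).mono_left
      (nhdsWithin_mono _ (fun x hx => ne_of_gt hx))
  have hev : ∀ᶠ l in nhdsWithin (0:ℝ) (Set.Ioi 0), slope φ 0 l ≤ φ 1 - φ 0 := by
    filter_upwards [Ioc_mem_nhdsGT_of_mem (Set.left_mem_Ico.2 one_pos)] with l hl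
    rcases eq_or_lt_of_le hl.2 with rfl | hl1
    · simp [slope_def_field]
    · have := hφ.secant_mono (a := 0) (x := l) (y := 1) trivial trivial trivial
        (ne_of_gt hl.1) one_ne_zero (le_of_lt hl1)
      simpa [slope_def_field] using this
  have := le_of_tendsto ht hev
  linarith

lemma slopeB {φ : ℝ → ℝ} {d : ℝ}
    (hmin : ∀ l ∈ Set.Icc (0:ℝ) 1, φ 0 ≤ φ l) (hd : HasDerivAt φ d 0) : 0 ≤ d := by
  have ht : Tendsto (slope φ 0) (nhdsWithin 0 (Set.Ioi 0)) (nhds d) :=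
    (hasDerivAt_iff_tendsto_slope.mp hd).mono_left
      (nhdsWithin_mono _ (fun x hx => ne_of_gt hx))
  refine ge_of_tendsto ht ?_
  filter_upwards [Ioc_mem_nhdsGT_of_mem (Set.left_mem_Ico.2 one_pos)] with l hl
  have h1 := hmin l ⟨le_of_lt hl.1, hl.2⟩
  have : slope φ 0 l = (φ l - φ 0) / l := by simp [slope_def_field]
  rw [this]
  exact div_nonneg (by linarith) hl.1.le

lemma lineDeriv' {n : ℕ} (a v : Fin n → ℝ) :
    HasDerivAt (fun l : ℝ => a + l • v) v 0 := by
  simpa using ((hasDerivAt_id (0:ℝ)).smul_const v).const_add a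

lemma hCompDeriv {n : ℕ} {h : (Fin n → ℝ) → ℝ} (hd : Differentiable ℝ h)
    (a v : Fin n → ℝ) :
    HasDerivAt (fun l : ℝ => h (a + l • v)) (fderiv ℝ h a v) 0 := by
  have h0 : a + (0:ℝ) • v = a := by simp
  have hF : HasFDerivAt h (fderiv ℝ h (a + (0:ℝ) • v)) ((fun l : ℝ => a + l • v) 0) :=
    (hd (a + (0:ℝ) • v)).hasFDerivAt
  have := hF.comp_hasDerivAt 0 (lineDeriv' a v)
  rw [h0] at this
  exact this

lemma tangent_le {n : ℕ} {h : (Fin n → ℝ) → ℝ} (hc : ConvexOn ℝ Set.univ h)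
    (hd : Differentiable ℝ h) (a b : Fin n → ℝ) :
    h a + fderiv ℝ h a (b - a) ≤ h b := by
  have hconv : ConvexOn ℝ Set.univ (fun l : ℝ => h (a + l • (b - a))) := by
    have := hc.comp_affineMap (AffineMap.lineMap a b : ℝ →ᵃ[ℝ] (Fin n → ℝ))
    simp only [Set.preimage_univ] at this
    have e : (fun l : ℝ => h (a + l • (b - a))) = h ∘ AffineMap.lineMap a b := by
      funext l
      simp [AffineMap.lineMap_apply, add_comm]
    rw [e]
    exact this
  have := slopeA hconv (hCompDeriv hd a (b - a))
  simpa using this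

/-- Convergence of mirror descent for Bregman-smooth objectives
(Birnbaum–Devanur–Xiao, Cheung–Cole–Devanur). -/
theorem mirror_descent_convergence
    (n : ℕ) (V : Set (Fin n → ℝ)) (hV : Convex ℝ V)
    (f h : (Fin n → ℝ) → ℝ)
    (hf : ConvexOn ℝ V f) (hh : ConvexOn ℝ Set.univ h)
    (hhdiff : Differentiable ℝ h)
    (D : (Fin n → ℝ) → (Fin n → ℝ) → ℝ)
    (hD : ∀ x y, D x y = h x - h y - fderiv ℝ h y (x - y))
    (γ : ℝ) (hγ : 0 < γ)
    (xstar : Fin n → ℝ) (hxstar : xstar ∈ V)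
    (hxstar_min : ∀ y ∈ V, f xstar ≤ f y)
    (x : ℕ → (Fin n → ℝ)) (g : ℕ → (Fin n → ℝ))
    (hx0 : x 0 ∈ V)
    (hsubgrad : ∀ t, ∀ y : Fin n → ℝ,
      f (x t) + ∑ i, g t i * (y i - x t i) ≤ f y)
    (hupdate : ∀ t, x (t + 1) ∈ V ∧ ∀ y ∈ V,
      f (x t) + (∑ i, g t i * (x (t + 1) i - x t i)) + γ * D (x (t + 1)) (x t) ≤
        f (x t) + (∑ i, g t i * (y i - x t i)) + γ * D y (x t))
    (hsmooth : ∀ t,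
      f (x (t + 1)) ≤
        f (x t) + (∑ i, g t i * (x (t + 1) i - x t i)) + γ * D (x (t + 1)) (x t)) :
    ∀ t : ℕ, 1 ≤ t → f (x t) - f xstar ≤ (γ / t) * D xstar (x 0) := by
  classical
  have hmem : ∀ t, x t ∈ V := by
    intro t
    induction t with
    | zero => exact hx0
    | succ s _ => exact (hupdate s).1
  have hDnn : ∀ a b, 0 ≤ D a b := by
    intro a b
    rw [hD]
    have := tangent_le hh hhdiff b a
    linarith
  have key : ∀ t, f (x (t+1)) - f xstar ≤ γ * (D xstar (x t) - D xstar (x (t+1))) := by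
    intro t
    set a := x (t+1) with ha
    set w := x t with hw
    set v := xstar - a with hv
    set L := fderiv ℝ h w with hL
    set L' := fderiv ℝ h a with hL'
    set φ : ℝ → ℝ := fun l =>
      f w + (∑ i, g t i * ((a i + l * v i) - w i))
        + γ * (h (a + l • v) - h w - L (a + l • v - w)) with hφ
    have hφeq : ∀ l : ℝ, φ l =
        f w + (∑ i, g t i * ((a + l • v) i - w i)) + γ * D (a + l • v) w := by
      intro l
      rw [hD, ← hL]
      simp [hφ]
    have hmemline : ∀ l ∈ Set.Icc (0:ℝ) 1, a + l • v ∈ V := by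
      intro l hl
      have hx := hV (hmem (t+1)) hxstar (by linarith [hl.2] : (0:ℝ) ≤ 1 - l) hl.1
        (by ring)
      have heq : (1 - l) • a + l • xstar = a + l • v := by
        rw [hv]
        module
      rwa [heq] at hx
    have hmin : ∀ l ∈ Set.Icc (0:ℝ) 1, φ 0 ≤ φ l := by
      intro l hl
      rw [hφeq, hφeq]
      have h0 : a + (0:ℝ) • v = a := by simp
      rw [h0]
      exact (hupdate t).2 _ (hmemline l hl)
    have hderiv : HasDerivAt φ ((∑ i, g t i * v i) + γ * (L' v - L v)) 0 := by
      have h1 : HasDerivAt (fun l : ℝ => ∑ i, g t i * ((a i + l * v i) - w i))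
          (∑ i, g t i * v i) 0 := by
        apply HasDerivAt.fun_sum
        intro i _
        have hb : HasDerivAt (fun l : ℝ => (a i + l * v i) - w i) (v i) 0 := by
          simpa using (((hasDerivAt_id (0:ℝ)).mul_const (v i)).const_add (a i)).sub_const (w i)
        simpa using hb.const_mul (g t i)
      have h2 : HasDerivAt (fun l : ℝ => h (a + l • v)) (L' v) 0 := by
        rw [hL']
        exact hCompDeriv hhdiff a v
      have h3 : HasDerivAt (fun l : ℝ => L (a + l • v - w)) (L v) 0 := by
        have heq : (fun l : ℝ => L (a + l • v - w)) = fun l : ℝ => L (a - w) + l * L v := by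
          funext l
          have hab : a + l • v - w = (a - w) + l • v := by abel
          rw [hab, map_add, map_smul]
          simp
        rw [heq]
        simpa using ((hasDerivAt_id (0:ℝ)).mul_const (L v)).const_add (L (a - w))
      exact (h1.const_add (f w)).add (((h2.sub_const (h w)).sub h3).const_mul γ)
    have hVI : 0 ≤ (∑ i, g t i * v i) + γ * (L' v - L v) := slopeB hmin hderiv
    have hsm := hsmooth t
    have hsg := hsubgrad t xstar
    have hsum : (∑ i, g t i * (xstar i - w i))
        = (∑ i, g t i * (a i - w i)) + ∑ i, g t i * v i := by
      rw [← Finset.sum_add_distrib]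
      apply Finset.sum_congr rfl
      intro i _
      rw [hv]
      simp [Pi.sub_apply]
      ring
    have hLsub : L (xstar - w) - L (a - w) = L v := by
      rw [← map_sub]
      congr 1
      rw [hv]
      abel
    have hDid : D xstar w - D a w = D xstar a + (L' v - L v) := by
      rw [hD, hD, hD, ← hL, ← hL', ← hv]
      linarith [hLsub]
    have hDidg : γ * (D xstar w - D a w) = γ * D xstar a + γ * (L' v - L v) := by
      rw [hDid]
      ring
    linarith
  have fdec : ∀ s, f (x (s+1)) ≤ f (x s) := by
    intro s
    have h1 := hsmooth s
    have h2 := (hupdate s).2 (x s) (hmem s)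
    have h3 : (∑ i, g s i * (x s i - x s i)) = 0 := by simp
    have h4 : D (x s) (x s) = 0 := by rw [hD]; simp
    have h5 : γ * D (x s) (x s) = 0 := by rw [h4]; ring
    linarith
  have fmono : ∀ s u : ℕ, s ≤ u → f (x u) ≤ f (x s) := by
    intro s u hsu
    exact antitone_nat_of_succ_le (f := fun s => f (x s)) fdec hsu
  intro t ht
  have htpos : (0:ℝ) < t := by exact_mod_cast ht
  have h1 : ∀ s ∈ Finset.range t,
      f (x t) - f xstar ≤ γ * D xstar (x s) - γ * D xstar (x (s+1)) := by
    intro s hs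
    have hst : f (x t) ≤ f (x (s+1)) := fmono (s+1) t (Finset.mem_range.mp hs)
    have := key s
    linarith
  have h2 := Finset.sum_le_sum h1
  rw [Finset.sum_const, Finset.card_range, Finset.sum_range_sub'
    (f := fun s => γ * D xstar (x s))] at h2
  have h4 : 0 ≤ γ * D xstar (x t) := mul_nonneg hγ.le (hDnn _ _)
  have h5 : (t : ℝ) * (f (x t) - f xstar) ≤ γ * D xstar (x 0) := by
    have : (t : ℕ) • (f (x t) - f xstar) = (t:ℝ) * (f (x t) - f xstar) := by
      simp [nsmul_eq_mul]
    rw [this] at h2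
    linarith
  rw [div_mul_eq_mul_div, le_div_iff₀ htpos]
  nlinarith [h5]
end
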